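/- Let P be a finite set of at least two points in the plane ℝ². Then the point visibility graph of P is either isomorphic to a path graph, or it has diameter at most two, i.e., every pair of distinct non-adjacent vertices has a common neighbor. -/

import Mathlib

/-- Two points `p q` are visible to each other with respect to the point set `P`
if they are distinct and no point of `P` lies in the open segment between them. -/
def Visible (P : Finset (ℝ × ℝ)) (p q : ℝ × ℝ) : Prop :=
  p ≠ q ∧ ∀ r ∈ P, r ∉ openSegment ℝ p q

/-- The point visibility graph of a finite point set `P` in the plane. -/
def PVG (P : Finset (ℝ × ℝ)) : SimpleGraph {x : ℝ × ℝ // x ∈ P} where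
  Adj u v := Visible P u.1 v.1
  symm := by
    constructor
    rintro u v ⟨hne, h⟩
    exact ⟨hne.symm, fun r hr hmem => h r hr (by rwa [openSegment_symm] at hmem)⟩
  loopless := by constructor; rintro u ⟨hne, -⟩; exact hne rfl

/-- cross product of v-u and w-u -/
def cross3 (u v w : ℝ × ℝ) : ℝ := (v.1-u.1)*(w.2-u.2) - (v.2-u.2)*(w.1-u.1)

lemma cross3_comb (u v x y : ℝ × ℝ) (a b : ℝ) (hab : a + b = 1) :
    cross3 u v (a • x + b • y) = a * cross3 u v x + b * cross3 u v y := by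
  simp only [cross3, Prod.smul_fst, Prod.smul_snd, Prod.fst_add, Prod.snd_add, smul_eq_mul]
  linear_combination ((v.1-u.1)*u.2 - (v.2-u.2)*u.1) * hab

lemma cross3_self_left (u v : ℝ × ℝ) : cross3 u v u = 0 := by simp [cross3]
lemma cross3_self_right (u v : ℝ × ℝ) : cross3 u v v = 0 := by simp [cross3]; ring

/-- In the non-collinear case, any two distinct points have a common visible point. -/
lemma common_neighbor (P : Finset (ℝ × ℝ)) (hnc : ¬ Collinear ℝ (P : Set (ℝ × ℝ)))
    (u v : ℝ × ℝ) (hu : u ∈ P) (hv : v ∈ P) (huv : u ≠ v) :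
    ∃ w ∈ P, Visible P u w ∧ Visible P v w := by
  -- some point has nonzero cross product
  have hex : ∃ w ∈ P, cross3 u v w ≠ 0 := by
    by_contra h
    push_neg at h
    apply hnc
    rw [collinear_iff_of_mem (Finset.mem_coe.2 hu)]
    refine ⟨v - u, fun p hp => ?_⟩
    have hc := h p (Finset.mem_coe.1 hp)
    have hd : v.1 - u.1 ≠ 0 ∨ v.2 - u.2 ≠ 0 := by
      by_contra hd
      push_neg at hd
      exact huv (by apply Prod.ext <;> [linarith [hd.1]; linarith [hd.2]])
    rcases hd with hd | hd
    · refine ⟨(p.1 - u.1)/(v.1 - u.1), ?_⟩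
      simp only [cross3] at hc
      apply Prod.ext <;> simp [Prod.smul_fst, Prod.smul_snd] <;> field_simp <;> nlinarith [hc]
    · refine ⟨(p.2 - u.2)/(v.2 - u.2), ?_⟩
      simp only [cross3] at hc
      apply Prod.ext <;> simp [Prod.smul_fst, Prod.smul_snd] <;> field_simp <;> nlinarith [hc]
  -- pick minimizing |cross3|
  obtain ⟨w0, hw0⟩ := hex
  obtain ⟨w, hwmem, hwmin⟩ := Finset.exists_min_image
    (P.filter (fun w => cross3 u v w ≠ 0)) (fun w => |cross3 u v w|)
    ⟨w0, Finset.mem_filter.2 ⟨hw0.1, hw0.2⟩⟩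
  rw [Finset.mem_filter] at hwmem
  obtain ⟨hwP, hwne⟩ := hwmem
  refine ⟨w, hwP, ?_, ?_⟩
  all_goals {
    constructor
    · rintro rfl
      first
        | exact hwne (cross3_self_left u v)
        | exact hwne (cross3_self_right u v)
    · rintro r hr ⟨a, b, ha, hb, hab, hcomb⟩
      have hcr : cross3 u v r = b * cross3 u v w := by
        rw [← hcomb, cross3_comb u v _ _ a b hab]
        first
          | rw [cross3_self_left]; ring
          | rw [cross3_self_right]; ring
      have hrne : cross3 u v r ≠ 0 := by
        rw [hcr]; exact mul_ne_zero (ne_of_gt hb) hwne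
      have := hwmin r (Finset.mem_filter.2 ⟨hr, hrne⟩)
      rw [hcr, abs_mul, abs_of_pos hb] at this
      nlinarith [abs_pos.2 hwne, this]
  }

lemma comb_line (c d x y : ℝ) (v a : ℝ × ℝ) (hcd : c + d = 1) :
    c • (x • v + a) + d • (y • v + a) = (c * x + d * y) • v + a := by
  apply Prod.ext <;>
    simp only [Prod.fst_add, Prod.snd_add, Prod.smul_fst, Prod.smul_snd, smul_eq_mul] <;>
    [linear_combination a.1 * hcd; linear_combination a.2 * hcd]

lemma path_iso (P : Finset (ℝ × ℝ)) (hcard : 2 ≤ P.card)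
    (hc : Collinear ℝ (P : Set (ℝ × ℝ))) :
    Nonempty ((PVG P) ≃g SimpleGraph.pathGraph P.card) := by
  obtain ⟨a, ha, b, hb, hab⟩ := Finset.one_lt_card.1 hcard
  obtain ⟨v, hv⟩ := (collinear_iff_of_mem (Finset.mem_coe.2 ha)).1 hc
  have hvne : v.1 ^ 2 + v.2 ^ 2 ≠ 0 := by
    obtain ⟨r, hr⟩ := hv a (Finset.mem_coe.2 ha)
    obtain ⟨s, hs⟩ := hv b (Finset.mem_coe.2 hb)
    intro h0
    have h1 : v.1 = 0 := by nlinarith [sq_nonneg v.1, sq_nonneg v.2]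
    have h2 : v.2 = 0 := by nlinarith [sq_nonneg v.1, sq_nonneg v.2]
    apply hab
    rw [hr, hs]
    apply Prod.ext <;> simp [h1, h2]
  set F : ℝ × ℝ → ℝ := fun q => ((q.1 - a.1) * v.1 + (q.2 - a.2) * v.2) / (v.1 ^ 2 + v.2 ^ 2)
    with hF
  have hrep : ∀ q ∈ P, q = F q • v + a := by
    intro q hq
    obtain ⟨r, hr⟩ := hv q (Finset.mem_coe.2 hq)
    have : F q = r := by
      rw [hr, hF]
      simp only [Prod.fst_add, Prod.snd_add, Prod.smul_fst, Prod.smul_snd, smul_eq_mul,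
        vadd_eq_add]
      field_simp
      ring
    rw [this]
    simpa using hr
  have hinj : ∀ p ∈ P, ∀ q ∈ P, F p = F q → p = q := by
    intro p hp q hq h
    rw [hrep p hp, hrep q hq, h]
  have hFcomb : ∀ (c d : ℝ) (x y : ℝ × ℝ), c + d = 1 → F (c • x + d • y) = c * F x + d * F y := by
    intro c d x y hcd
    rw [hF]
    simp only [Prod.fst_add, Prod.snd_add, Prod.smul_fst, Prod.smul_snd, smul_eq_mul]
    field_simp
    linear_combination ((a.1 * v.1 + a.2 * v.2)) * hcd
  have hseg : ∀ p ∈ P, ∀ q ∈ P, ∀ r ∈ P,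
      (r ∈ openSegment ℝ p q ↔ F r ∈ openSegment ℝ (F p) (F q)) := by
    intro p hp q hq r hr
    constructor
    · rintro ⟨c, d, hc', hd, hcd, hcomb⟩
      exact ⟨c, d, hc', hd, hcd, by rw [smul_eq_mul, smul_eq_mul, ← hFcomb c d p q hcd, hcomb]⟩
    · rintro ⟨c, d, hc', hd, hcd, hcomb⟩
      refine ⟨c, d, hc', hd, hcd, ?_⟩
      have : c • p + d • q = r := by
        conv_lhs => rw [hrep p hp, hrep q hq]
        conv_rhs => rw [hrep r hr]
        rw [comb_line c d _ _ v a hcd]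
        rw [← hcomb]
        simp
      exact this
  -- the image of F
  set T : Finset ℝ := P.image F with hT
  have hmemT : ∀ x : ℝ, x ∈ T ↔ ∃ r ∈ P, F r = x := by
    intro x; rw [hT, Finset.mem_image]
  have hTcard : T.card = P.card :=
    Finset.card_image_of_injOn (fun p hp q hq h => hinj p hp q hq h)
  -- the equivalence
  have hsurj : ∀ y : {y : ℝ // y ∈ T}, ∃ p : {x : ℝ × ℝ // x ∈ P},
      (⟨F p.1, Finset.mem_image_of_mem F p.2⟩ : {y : ℝ // y ∈ T}) = y := by
    rintro ⟨y, hy⟩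
    obtain ⟨r, hr, hry⟩ := (hmemT y).1 hy
    exact ⟨⟨r, hr⟩, Subtype.ext hry⟩
  set e0 : {x : ℝ × ℝ // x ∈ P} ≃ {y : ℝ // y ∈ T} :=
    Equiv.ofBijective (fun p => ⟨F p.1, Finset.mem_image_of_mem F p.2⟩)
      ⟨fun p q h => Subtype.ext (hinj p.1 p.2 q.1 q.2 (congrArg Subtype.val h)),
       hsurj⟩ with he0
  set e1 : Fin P.card ≃o {y : ℝ // y ∈ T} := T.orderIsoOfFin hTcard with he1
  -- covering in T
  have hcov : ∀ x y : {y : ℝ // y ∈ T}, x ⋖ y ↔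
      ((x : ℝ) < y ∧ ∀ r ∈ P, ¬((x : ℝ) < F r ∧ F r < (y : ℝ))) := by
    rintro ⟨x, hx⟩ ⟨y, hy⟩
    constructor
    · rintro ⟨hlt, hbetween⟩
      refine ⟨hlt, fun r hr ⟨h1, h2⟩ => ?_⟩
      exact hbetween (Subtype.mk_lt_mk.2 h1 :
          (⟨x, hx⟩ : {y : ℝ // y ∈ T}) < ⟨F r, Finset.mem_image_of_mem F hr⟩)
        (Subtype.mk_lt_mk.2 h2)
    · rintro ⟨hlt, hbetween⟩
      refine ⟨hlt, ?_⟩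
      rintro ⟨c, hcT⟩ h1 h2
      obtain ⟨r, hr, hrc⟩ := (hmemT c).1 hcT
      exact hbetween r hr ⟨by rw [hrc]; exact h1, by rw [hrc]; exact h2⟩
  -- adjacency characterization
  have hadj : ∀ p q : {x : ℝ × ℝ // x ∈ P},
      (PVG P).Adj p q ↔ (e0 p ⋖ e0 q ∨ e0 q ⋖ e0 p) := by
    intro p q
    have he0p : (e0 p : ℝ) = F p.1 := rfl
    have he0q : (e0 q : ℝ) = F q.1 := rfl
    rw [hcov, hcov, he0p, he0q]
    show Visible P p.1 q.1 ↔ _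
    unfold Visible
    constructor
    · rintro ⟨hne, hvis⟩
      have hFne : F p.1 ≠ F q.1 := fun h => hne (hinj p.1 p.2 q.1 q.2 h)
      rcases lt_or_gt_of_ne hFne with hlt | hlt
      · left
        refine ⟨hlt, fun r hr ⟨h1, h2⟩ => ?_⟩
        exact hvis r hr ((hseg p.1 p.2 q.1 q.2 r hr).2
          (by rw [openSegment_eq_Ioo hlt]; exact ⟨h1, h2⟩))
      · right
        refine ⟨hlt, fun r hr ⟨h1, h2⟩ => ?_⟩
        exact hvis r hr ((hseg p.1 p.2 q.1 q.2 r hr).2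
          (by rw [openSegment_symm, openSegment_eq_Ioo hlt]; exact ⟨h1, h2⟩))
    · rintro (⟨hlt, hbet⟩ | ⟨hlt, hbet⟩)
      · refine ⟨fun h => absurd (congrArg F h) (ne_of_lt hlt), fun r hr hmem => ?_⟩
        have := (hseg p.1 p.2 q.1 q.2 r hr).1 hmem
        rw [openSegment_eq_Ioo hlt] at this
        exact hbet r hr ⟨this.1, this.2⟩
      · refine ⟨fun h => absurd (congrArg F h) (ne_of_gt hlt), fun r hr hmem => ?_⟩
        have := (hseg p.1 p.2 q.1 q.2 r hr).1 hmem
        rw [openSegment_symm, openSegment_eq_Ioo hlt] at this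
        exact hbet r hr ⟨this.1, this.2⟩
  -- assemble the isomorphism
  refine ⟨⟨e0.trans e1.symm.toEquiv, ?_⟩⟩
  intro p q
  show (SimpleGraph.hasse (Fin P.card)).Adj (e1.symm (e0 p)) (e1.symm (e0 q)) ↔ _
  rw [SimpleGraph.hasse_adj, apply_covBy_apply_iff e1.symm, apply_covBy_apply_iff e1.symm,
    hadj p q]

theorem stmt_1 (P : Finset (ℝ × ℝ)) (hcard : 2 ≤ P.card) :
    (∃ n : ℕ, Nonempty ((PVG P) ≃g SimpleGraph.pathGraph n)) ∨
      (∀ u v : {x : ℝ × ℝ // x ∈ P}, u ≠ v → ¬ (PVG P).Adj u v →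
        ∃ w, (PVG P).Adj u w ∧ (PVG P).Adj v w) := by
  by_cases hc : Collinear ℝ (P : Set (ℝ × ℝ))
  · exact Or.inl ⟨P.card, path_iso P hcard hc⟩
  · refine Or.inr fun u v hne _ => ?_
    have huv : u.1 ≠ v.1 := fun h => hne (Subtype.ext h)
    obtain ⟨w, hwP, hw1, hw2⟩ := common_neighbor P hc u.1 v.1 u.2 v.2 huv
    exact ⟨⟨w, hwP⟩, hw1, hw2⟩
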